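/- arXiv:1506.01442 — 3 statements merged into one kernel-verified Lean document; each statement's English description precedes it below -/
import Mathlib

section
/- For real p and natural number k with k > p ≥ 0, the absolute value of the generalized binomial coefficient satisfies |C(p,k)| ≤ (p/k)^(⌊p⌋+1). In particular, if p is a nonnegative integer with k > p, then C(p,k) = 0. -/
/-- Generalized binomial coefficient `C(p,k) = p(p-1)⋯(p-k+1)/k!` for real `p`. -/
noncomputable def genBinom (p : ℝ) (k : ℕ) : ℝ :=
  (∏ i ∈ Finset.range k, (p - i)) / (Nat.factorial k)

lemma genBinom_succ (p : ℝ) (j : ℕ) :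
    genBinom p (j + 1) = genBinom p j * (p - j) / (j + 1) := by
  unfold genBinom
  rw [Finset.prod_range_succ, Nat.factorial_succ]
  push_cast
  rw [div_mul_eq_mul_div, div_div, mul_comm ((j : ℝ) + 1)]

lemma ratio_le (p i K : ℝ) (hi : 0 ≤ i) (hpK : p ≤ K) (hiK : i < K) :
    (p - i) / (K - i) ≤ p / K := by
  have hK : 0 < K := lt_of_le_of_lt hi hiK
  rw [div_le_div_iff₀ (by linarith) hK]
  nlinarith

lemma genBinom_key (p : ℝ) (n : ℕ) (hp : 0 ≤ p) (hnp : (n : ℝ) ≤ p) (hpn : p < n + 1) :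
    ∀ m, n + 1 ≤ m → |genBinom p m| ≤ (p / m) ^ (n + 1) := by
  intro m hm
  induction m with
  | zero => omega
  | succ j ih =>
    rcases eq_or_lt_of_le hm with hbase | hstep
    · -- base case: j = n
      have hj : j = n := by omega
      subst hj
      have hfac : ((j + 1).factorial : ℝ) = ∏ i ∈ Finset.range (j + 1), ((j : ℝ) + 1 - i) := by
        rw [← Finset.prod_range_add_one_eq_factorial (j + 1)]
        rw [← Finset.prod_range_reflect (fun i => ((i : ℕ) + 1)) (j + 1)]
        push_cast
        apply Finset.prod_congr rfl
        intro i hi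
        have hi' : i ≤ j := Nat.lt_succ_iff.mp (Finset.mem_range.mp hi)
        rw [Nat.cast_sub hi']
        ring
      have hgb : genBinom p (j + 1) =
          ∏ i ∈ Finset.range (j + 1), (p - i) / ((j : ℝ) + 1 - i) := by
        unfold genBinom
        rw [hfac, Finset.prod_div_distrib]
      have hnn : ∀ i ∈ Finset.range (j + 1), 0 ≤ (p - i) / ((j : ℝ) + 1 - i) := by
        intro i hi
        have hi' : i ≤ j := Nat.lt_succ_iff.mp (Finset.mem_range.mp hi)
        have h1 : (i : ℝ) ≤ j := by exact_mod_cast hi'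
        apply div_nonneg <;> linarith
      have hle : ∀ i ∈ Finset.range (j + 1),
          (p - i) / ((j : ℝ) + 1 - i) ≤ p / ((j : ℝ) + 1) := by
        intro i hi
        have hi' : i ≤ j := Nat.lt_succ_iff.mp (Finset.mem_range.mp hi)
        have h1 : (i : ℝ) ≤ j := by exact_mod_cast hi'
        exact ratio_le p i ((j : ℝ) + 1) (by positivity) (by linarith) (by linarith)
      calc |genBinom p (j + 1)| = genBinom p (j + 1) := by
            rw [abs_of_nonneg]
            rw [hgb]
            exact Finset.prod_nonneg hnn
        _ = ∏ i ∈ Finset.range (j + 1), (p - i) / ((j : ℝ) + 1 - i) := hgb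
        _ ≤ ∏ _i ∈ Finset.range (j + 1), p / ((j : ℝ) + 1) :=
            Finset.prod_le_prod hnn hle
        _ = (p / ((j : ℝ) + 1)) ^ (j + 1) := by
            rw [Finset.prod_const, Finset.card_range]
        _ = (p / (((j : ℕ) + 1 : ℕ) : ℝ)) ^ (j + 1) := by push_cast; ring_nf
    · -- inductive step: n + 1 ≤ j
      have hj : n + 1 ≤ j := by omega
      have IH := ih hj
      have hjn : ((n : ℝ) + 1) ≤ j := by exact_mod_cast hj
      have hjp : p < j := lt_of_lt_of_le hpn hjn
      have hj0 : (0 : ℝ) < j := lt_of_le_of_lt hp hjp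
      have hj1 : (0 : ℝ) < (j : ℝ) + 1 := by linarith
      have habs : |genBinom p (j + 1)| = |genBinom p j| * (j - p) / (j + 1) := by
        rw [genBinom_succ, abs_div, abs_mul, abs_of_pos hj1,
          abs_of_neg (show p - (j : ℝ) < 0 by linarith)]
        ring
      have hpk : (0 : ℝ) ≤ p / j := div_nonneg hp hj0.le
      have bern : ((j : ℝ) - n) / (j + 1) ≤ ((j : ℝ) / (j + 1)) ^ (n + 1) := by
        have h2 : (-2 : ℝ) ≤ -(1 / ((j : ℝ) + 1)) := by
          have : 1 / ((j : ℝ) + 1) ≤ 1 := by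
            rw [div_le_one hj1]; linarith
          linarith
        have hb := one_add_mul_le_pow h2 (n + 1)
        have e1 : (1 : ℝ) + -(1 / ((j : ℝ) + 1)) = (j : ℝ) / (j + 1) := by
          field_simp
          ring
        have e2 : (1 : ℝ) + ((n : ℝ) + 1) * -(1 / ((j : ℝ) + 1)) =
            ((j : ℝ) - n) / (j + 1) := by
          field_simp
          ring
        rw [e1] at hb
        push_cast at hb
        rw [e2] at hb
        exact hb
      calc |genBinom p (j + 1)| = |genBinom p j| * ((j - p) / (j + 1)) := by
            rw [habs]; ring
        _ ≤ (p / j) ^ (n + 1) * ((j - p) / (j + 1)) := by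
            apply mul_le_mul_of_nonneg_right IH
            apply div_nonneg (by linarith) hj1.le
        _ ≤ (p / j) ^ (n + 1) * (((j : ℝ) - n) / (j + 1)) := by
            apply mul_le_mul_of_nonneg_left _ (pow_nonneg hpk _)
            gcongr <;> linarith
        _ ≤ (p / j) ^ (n + 1) * ((j : ℝ) / (j + 1)) ^ (n + 1) := by
            exact mul_le_mul_of_nonneg_left bern (pow_nonneg hpk _)
        _ = (p / ((j : ℝ) + 1)) ^ (n + 1) := by
            rw [← mul_pow]
            congr 1
            field_simp
        _ = (p / (((j : ℕ) + 1 : ℕ) : ℝ)) ^ (n + 1) := by push_cast; ring_nf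

/-- For real `p` and natural `k` with `k > p ≥ 0`, `|C(p,k)| ≤ (p/k)^(⌊p⌋+1)`;
in particular, if `p` is a nonnegative integer then `C(p,k) = 0`. -/
theorem stmt0 (p : ℝ) (k : ℕ) (hp : 0 ≤ p) (hk : p < k) :
    |genBinom p k| ≤ (p / k) ^ (⌊p⌋₊ + 1) ∧
    (∀ m : ℕ, p = m → genBinom p k = 0) := by
  constructor
  · have hnp : (⌊p⌋₊ : ℝ) ≤ p := Nat.floor_le hp
    have hpn : p < ⌊p⌋₊ + 1 := Nat.lt_floor_add_one p
    have hkn : ⌊p⌋₊ + 1 ≤ k := Nat.floor_lt hp |>.mpr hk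
    exact genBinom_key p ⌊p⌋₊ hp hnp hpn k hkn
  · intro m hm
    subst hm
    have hmk : m < k := by exact_mod_cast hk
    unfold genBinom
    rw [Finset.prod_eq_zero (Finset.mem_range.mpr hmk) (by simp)]
    simp
end

section
/- Let X₁,…,X_k be independent real random variables each with expectation μ and variance at most σ², let λ ∈ ℝ, let η² = σ² + (μ−λ)², and let ψ be analytic on the interval between λ and μ. Then the variance of the Taylor polynomial estimator ϑ = Σ_{j=0}^{k} γ_j(λ) ∏_{l=1}^{j}(X_l − λ) satisfies Var[ϑ] ≤ (Σ_{j=1}^{k} |γ_j(λ)| η^j)². -/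
open MeasureTheory ProbabilityTheory

section Aux

variable {Ω : Type*} [MeasurableSpace Ω] {P : Measure Ω}

/-- Integrability and value of the integral of a product of independent
integrable random variables. -/
lemma aux_prod {ι : Type*} [IsProbabilityMeasure P] {f : ι → Ω → ℝ}
    (hindep : iIndepFun f P)
    (hmeas : ∀ i, Measurable (f i)) (hint : ∀ i, Integrable (f i) P) (s : Finset ι) :
    Integrable (fun ω => ∏ i ∈ s, f i ω) P ∧
      ∫ ω, ∏ i ∈ s, f i ω ∂P = ∏ i ∈ s, ∫ ω, f i ω ∂P := by
  classical
  induction s using Finset.induction with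
  | empty => simp
  | @insert a s ha ih =>
    have hprodfun : (∏ j ∈ s, f j) = fun ω => ∏ j ∈ s, f j ω := by
      funext ω; simp
    have hIF : IndepFun (∏ j ∈ s, f j) (f a) P :=
      hindep.indepFun_finsetProd_of_notMem hmeas ha
    have hprodint : Integrable (∏ j ∈ s, f j) P := by rw [hprodfun]; exact ih.1
    have hmul : Integrable ((∏ j ∈ s, f j) * f a) P :=
      hIF.integrable_mul hprodint (hint a)
    have hmulval : ∫ ω, ((∏ j ∈ s, f j) * f a) ω ∂P
        = (∫ ω, ∏ j ∈ s, f j ω ∂P) * ∫ ω, f a ω ∂P := by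
      have := hIF.integral_mul_eq_mul_integral hprodint.aestronglyMeasurable (hint a).aestronglyMeasurable
      rw [this, hprodfun]
    have hfun : (fun ω => ∏ i ∈ insert a s, f i ω) = (∏ j ∈ s, f j) * f a := by
      funext ω
      simp [Finset.prod_insert ha, mul_comm]
    constructor
    · rw [hfun]; exact hmul
    · rw [hfun, hmulval, ih.2, Finset.prod_insert ha, mul_comm]

/-- `evariance` as a square of an `eLpNorm`. -/
lemma aux_evar_eq (P : Measure Ω) (X : Ω → ℝ) :
    evariance X P = eLpNorm (fun ω => X ω - ∫ x, X x ∂P) 2 P ^ 2 := by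
  rw [eLpNorm_eq_lintegral_rpow_enorm_toReal two_ne_zero ENNReal.ofNat_ne_top]
  simp only [ENNReal.toReal_ofNat, one_div]
  rw [← ENNReal.rpow_natCast _ 2, ← ENNReal.rpow_mul]
  norm_num
  rw [evariance]

/-- Adding a constant does not change the variance (for integrable `f`). -/
lemma aux_var_const_add [IsProbabilityMeasure P] (c : ℝ) (f : Ω → ℝ)
    (hf : Integrable f P) :
    variance (fun ω => c + f ω) P = variance f P := by
  have hE : ∫ ω, (c + f ω) ∂P = c + ∫ ω, f ω ∂P := by
    rw [integral_add (integrable_const c) hf, integral_const]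
    simp
  rw [variance, variance, evariance, evariance]
  refine congrArg ENNReal.toReal (lintegral_congr fun ω => ?_)
  rw [hE]
  have h : c + f ω - (c + ∫ x, f x ∂P) = f ω - ∫ x, f x ∂P := by ring
  rw [h]

/-- Minkowski-type bound for the variance of a sum. -/
lemma aux_var_sum {ι : Type*} [IsProbabilityMeasure P] (s : Finset ι) (f : ι → Ω → ℝ)
    (hf : ∀ i ∈ s, MemLp (f i) 2 P) :
    variance (fun ω => ∑ i ∈ s, f i ω) P
      ≤ (∑ i ∈ s, Real.sqrt (variance (f i) P)) ^ 2 := by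
  classical
  have hint : ∀ i ∈ s, Integrable (f i) P := fun i hi => (hf i hi).integrable one_le_two
  have hE : ∫ ω, (∑ i ∈ s, f i ω) ∂P = ∑ i ∈ s, ∫ ω, f i ω ∂P :=
    integral_finset_sum s hint
  have hcent : (fun ω => (∑ i ∈ s, f i ω) - ∫ x, (∑ i ∈ s, f i x) ∂P)
      = ∑ i ∈ s, (fun ω => f i ω - ∫ x, f i x ∂P) := by
    funext ω
    rw [hE]
    simp [Finset.sum_sub_distrib]
  have h2 : ∀ i ∈ s, eLpNorm (fun ω => f i ω - ∫ x, f i x ∂P) 2 P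
      = ENNReal.ofReal (Real.sqrt (variance (f i) P)) := by
    intro i hi
    have ha : eLpNorm (fun ω => f i ω - ∫ x, f i x ∂P) 2 P ^ 2
        = ENNReal.ofReal (variance (f i) P) := by
      rw [← aux_evar_eq, (hf i hi).ofReal_variance_eq]
    have hb : eLpNorm (fun ω => f i ω - ∫ x, f i x ∂P) 2 P
        = (ENNReal.ofReal (variance (f i) P)) ^ ((1 : ℝ)/2) := by
      rw [← ha, ← ENNReal.rpow_natCast _ 2, ← ENNReal.rpow_mul]
      norm_num
    rw [hb, ENNReal.ofReal_rpow_of_nonneg (variance_nonneg _ _) (by norm_num),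
      Real.sqrt_eq_rpow]
  have h1 : evariance (fun ω => ∑ i ∈ s, f i ω) P
      ≤ (∑ i ∈ s, ENNReal.ofReal (Real.sqrt (variance (f i) P))) ^ 2 := by
    rw [aux_evar_eq, hcent]
    have hle : eLpNorm (∑ i ∈ s, fun ω => f i ω - ∫ x, f i x ∂P) 2 P
        ≤ ∑ i ∈ s, eLpNorm (fun ω => f i ω - ∫ x, f i x ∂P) 2 P :=
      eLpNorm_sum_le (fun i hi =>
        ((hf i hi).aestronglyMeasurable.sub aestronglyMeasurable_const)) one_le_two
    calc eLpNorm (∑ i ∈ s, fun ω => f i ω - ∫ x, f i x ∂P) 2 P ^ 2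
        ≤ (∑ i ∈ s, eLpNorm (fun ω => f i ω - ∫ x, f i x ∂P) 2 P) ^ 2 :=
          pow_le_pow_left' hle 2
      _ = (∑ i ∈ s, ENNReal.ofReal (Real.sqrt (variance (f i) P))) ^ 2 := by
          rw [Finset.sum_congr rfl h2]
  have h3 : evariance (fun ω => ∑ i ∈ s, f i ω) P
      ≤ ENNReal.ofReal ((∑ i ∈ s, Real.sqrt (variance (f i) P)) ^ 2) := by
    refine h1.trans_eq ?_
    rw [← ENNReal.ofReal_sum_of_nonneg (fun i _ => Real.sqrt_nonneg _),
      ← ENNReal.ofReal_pow (Finset.sum_nonneg fun i _ => Real.sqrt_nonneg _)]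
  exact ENNReal.toReal_le_of_le_ofReal (sq_nonneg _) h3

end Aux

/-- Variance of the Taylor polynomial estimator:
with `η² = σ² + (μ−λ)²`, `Var[ϑ] ≤ (Σ_{j=1}^{k} |γ_j(λ)| η^j)²`. -/
theorem stmt2 {Ω : Type*} [MeasurableSpace Ω] (P : Measure Ω) [IsProbabilityMeasure P]
    (k : ℕ) (X : Fin k → Ω → ℝ) (μ σ lam : ℝ) (ψ : ℝ → ℝ)
    (hmeas : ∀ l, Measurable (X l))
    (hindep : iIndepFun X P)
    (hL2 : ∀ l, MemLp (X l) 2 P)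
    (hmean : ∀ l, ∫ ω, X l ω ∂P = μ)
    (hvar : ∀ l, variance (X l) P ≤ σ ^ 2)
    (hanal : AnalyticOnNhd ℝ ψ (Set.uIcc lam μ)) :
    variance (fun ω => ∑ j ∈ Finset.range (k + 1),
        (iteratedDeriv j ψ lam / (Nat.factorial j)) *
          ∏ l ∈ Finset.univ.filter (fun l : Fin k => (l : ℕ) < j), (X l ω - lam)) P
      ≤ (∑ j ∈ Finset.Icc 1 k,
          |iteratedDeriv j ψ lam / (Nat.factorial j)| *
            Real.sqrt (σ ^ 2 + (μ - lam) ^ 2) ^ j) ^ 2 := by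
  classical
  set γ : ℕ → ℝ := fun j => iteratedDeriv j ψ lam / (Nat.factorial j) with hγ
  set Z : Fin k → Ω → ℝ := fun l ω => X l ω - lam with hZ
  set g : ℕ → Ω → ℝ :=
    fun j ω => ∏ l ∈ Finset.univ.filter (fun l : Fin k => (l : ℕ) < j), Z l ω with hg
  set η2 : ℝ := σ ^ 2 + (μ - lam) ^ 2 with hη2
  have hη2_nonneg : 0 ≤ η2 := add_nonneg (sq_nonneg _) (sq_nonneg _)
  -- basic properties of the centered variables Z l
  have hZmeas : ∀ l, Measurable (Z l) := fun l => (hmeas l).sub measurable_const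
  have hZL2 : ∀ l, MemLp (Z l) 2 P := fun l => (hL2 l).sub (memLp_const lam)
  have hZint : ∀ l, Integrable (Z l) P := fun l => (hZL2 l).integrable one_le_two
  have hZmean : ∀ l, ∫ ω, Z l ω ∂P = μ - lam := by
    intro l
    rw [integral_sub ((hL2 l).integrable one_le_two) (integrable_const lam),
      hmean l, integral_const]
    simp
  -- variance of Z l equals variance of X l
  have hZvar : ∀ l, variance (Z l) P = variance (X l) P := by
    intro l
    rw [variance, variance, evariance, evariance]
    refine congrArg ENNReal.toReal (lintegral_congr fun ω => ?_)
    rw [hZmean l, hmean l]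
    have : Z l ω - (μ - lam) = X l ω - μ := by rw [hZ]; ring
    rw [this]
  -- second moment of Z l
  have hZsq_int : ∀ l, Integrable (fun ω => Z l ω ^ 2) P := fun l => (hZL2 l).integrable_sq
  have hZsq_le : ∀ l, ∫ ω, Z l ω ^ 2 ∂P ≤ η2 := by
    intro l
    have hv := variance_eq_sub (hZL2 l)
    have : ∫ ω, Z l ω ^ 2 ∂P = variance (Z l) P + (∫ ω, Z l ω ∂P) ^ 2 := by
      have : P[(Z l) ^ 2] = ∫ ω, Z l ω ^ 2 ∂P := by rfl
      rw [← this]; rw [hv]; ring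
    rw [this, hZmean l, hZvar l, hη2]
    exact add_le_add_left (hvar l) _
  have hZsq_nonneg : ∀ l, 0 ≤ ∫ ω, Z l ω ^ 2 ∂P :=
    fun l => integral_nonneg fun ω => sq_nonneg _
  -- independence of squares
  have hindepsq : iIndepFun (fun l ω => Z l ω ^ 2) P := by
    have := hindep.comp (fun _ => fun x : ℝ => (x - lam) ^ 2)
      (fun _ => (measurable_id.sub_const lam).pow_const 2)
    exact this
  have hZsqmeas : ∀ l, Measurable (fun ω => Z l ω ^ 2) := fun l => (hZmeas l).pow_const 2
  -- product facts
  have hprod := fun (s : Finset (Fin k)) =>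
    aux_prod hindepsq hZsqmeas hZsq_int s
  -- g j is measurable and in L²
  have hgmeas : ∀ j, Measurable (g j) := by
    intro j
    exact Finset.measurable_prod _ fun l _ => hZmeas l
  have hgsq : ∀ j, (fun ω => g j ω ^ 2)
      = fun ω => ∏ l ∈ Finset.univ.filter (fun l : Fin k => (l : ℕ) < j), Z l ω ^ 2 := by
    intro j
    funext ω
    rw [hg]
    simp [Finset.prod_pow]
  have hgL2 : ∀ j, MemLp (g j) 2 P := by
    intro j
    refine (memLp_two_iff_integrable_sq (hgmeas j).aestronglyMeasurable).2 ?_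
    rw [hgsq j]
    exact (hprod _).1
  -- cardinality of the index set
  have hcard : ∀ j ∈ Finset.Icc 1 k,
      (Finset.univ.filter (fun l : Fin k => (l : ℕ) < j)).card = j := by
    intro j hj
    have hjk : j ≤ k := (Finset.mem_Icc.1 hj).2
    apply Finset.card_eq_of_bijective (fun i hi => (⟨i, lt_of_lt_of_le hi hjk⟩ : Fin k))
    · intro a ha
      simp only [Finset.mem_filter, Finset.mem_univ, true_and] at ha
      exact ⟨(a : ℕ), ha, by ext; rfl⟩
    · intro i hi
      simp only [Finset.mem_filter, Finset.mem_univ, true_and]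
      exact hi
    · intro i i' hi hi' h
      exact congrArg Fin.val h
  -- variance bound for g j
  have hgvar : ∀ j ∈ Finset.Icc 1 k, variance (g j) P ≤ η2 ^ j := by
    intro j hj
    have h1 : variance (g j) P ≤ ∫ ω, g j ω ^ 2 ∂P := by
      have := variance_le_expectation_sq (μ := P) (hgmeas j).aestronglyMeasurable
      calc variance (g j) P ≤ P[(g j) ^ 2] := this
        _ = ∫ ω, g j ω ^ 2 ∂P := by rfl
    have h2 : ∫ ω, g j ω ^ 2 ∂P
        = ∏ l ∈ Finset.univ.filter (fun l : Fin k => (l : ℕ) < j), ∫ ω, Z l ω ^ 2 ∂P := by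
      rw [show (fun ω => g j ω ^ 2) = _ from hgsq j] at *
      exact (hprod _).2
    have h3 : ∏ l ∈ Finset.univ.filter (fun l : Fin k => (l : ℕ) < j), ∫ ω, Z l ω ^ 2 ∂P
        ≤ η2 ^ j := by
      calc ∏ l ∈ Finset.univ.filter (fun l : Fin k => (l : ℕ) < j), ∫ ω, Z l ω ^ 2 ∂P
          ≤ ∏ l ∈ Finset.univ.filter (fun l : Fin k => (l : ℕ) < j), η2 :=
            Finset.prod_le_prod (fun l _ => hZsq_nonneg l) (fun l _ => hZsq_le l)
        _ = η2 ^ j := by rw [Finset.prod_const, hcard j hj]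
    calc variance (g j) P ≤ ∫ ω, g j ω ^ 2 ∂P := h1
      _ = _ := h2
      _ ≤ η2 ^ j := h3
  -- split off the j = 0 constant term
  have hsplit : Finset.range (k + 1) = insert 0 (Finset.Icc 1 k) := by
    ext x
    simp only [Finset.mem_range, Finset.mem_insert, Finset.mem_Icc]
    omega
  have hg0 : g 0 = fun _ => 1 := by
    funext ω
    rw [hg]
    simp
  have hΘ : (fun ω => ∑ j ∈ Finset.range (k + 1), γ j * g j ω)
      = fun ω => γ 0 + ∑ j ∈ Finset.Icc 1 k, γ j * g j ω := by
    funext ω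
    rw [hsplit, Finset.sum_insert (by simp), hg0]
    simp
  -- the sum over Icc 1 k is integrable
  have hfL2 : ∀ j ∈ Finset.Icc 1 k, MemLp (fun ω => γ j * g j ω) 2 P :=
    fun j _ => (hgL2 j).const_mul (γ j)
  have hfint : Integrable (fun ω => ∑ j ∈ Finset.Icc 1 k, γ j * g j ω) P :=
    integrable_finset_sum _ (fun j hj => ((hfL2 j hj).integrable one_le_two))
  -- main bound
  have hmain : variance (fun ω => ∑ j ∈ Finset.Icc 1 k, γ j * g j ω) P
      ≤ (∑ j ∈ Finset.Icc 1 k, Real.sqrt (variance (fun ω => γ j * g j ω) P)) ^ 2 :=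
    aux_var_sum _ _ hfL2
  -- bound each sqrt term
  have hterm : ∀ j ∈ Finset.Icc 1 k,
      Real.sqrt (variance (fun ω => γ j * g j ω) P) ≤ |γ j| * Real.sqrt η2 ^ j := by
    intro j hj
    rw [variance_const_mul]
    rw [Real.sqrt_mul (sq_nonneg _), Real.sqrt_sq_eq_abs]
    refine mul_le_mul_of_nonneg_left ?_ (abs_nonneg _)
    have h1 : variance (g j) P ≤ (Real.sqrt η2 ^ j) ^ 2 := by
      have : (Real.sqrt η2 ^ j) ^ 2 = η2 ^ j := by
        rw [← pow_mul, mul_comm j 2, pow_mul, Real.sq_sqrt hη2_nonneg]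
      rw [this]
      exact hgvar j hj
    calc Real.sqrt (variance (g j) P) ≤ Real.sqrt ((Real.sqrt η2 ^ j) ^ 2) :=
          Real.sqrt_le_sqrt h1
      _ = Real.sqrt η2 ^ j := Real.sqrt_sq (pow_nonneg (Real.sqrt_nonneg _) _)
  -- put everything together
  calc variance (fun ω => ∑ j ∈ Finset.range (k + 1), γ j * g j ω) P
      = variance (fun ω => ∑ j ∈ Finset.Icc 1 k, γ j * g j ω) P := by
        rw [hΘ, aux_var_const_add _ _ hfint]
    _ ≤ (∑ j ∈ Finset.Icc 1 k, Real.sqrt (variance (fun ω => γ j * g j ω) P)) ^ 2 := hmain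
    _ ≤ (∑ j ∈ Finset.Icc 1 k, |γ j| * Real.sqrt η2 ^ j) ^ 2 := by
        refine pow_le_pow_left₀ (Finset.sum_nonneg fun j _ => Real.sqrt_nonneg _)
          (Finset.sum_le_sum hterm) 2
end

section
/- For every integer k ≥ 1 there exists a set Y of binary vectors in {0,1}^{8k} such that |Y| ≥ 2^{0.08k}, every vector in Y has exactly k ones, and any two distinct vectors in Y differ in at least 3k/2 coordinates (minimum Hamming distance ≥ 3k/2). -/
open Finset
open Finset

lemma sigma_heq {k : ℕ} (S S' : Finset (Fin k)) (g : S → Fin 7) (g' : S' → Fin 7)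
    (h : S = S') (hg : HEq g g') : ∀ j (hj : j ∈ S) (hj' : j ∈ S'), g ⟨j, hj⟩ = g' ⟨j, hj'⟩ := by
  subst h
  have := eq_of_heq hg
  subst this
  intros; rfl

lemma sphereBound (k r : ℕ) (x : Fin k → Fin 8) :
    (univ.filter (fun y : Fin k → Fin 8 => hammingDist x y = r)).card ≤ k.choose r * 7 ^ r := by
  classical
  have hcardT : ((powersetCard r (univ : Finset (Fin k))).sigma
      (fun S => (univ : Finset (S → Fin 7)))).card = k.choose r * 7 ^ r := by
    rw [Finset.card_sigma]
    have h1 : ∀ S ∈ powersetCard r (univ : Finset (Fin k)),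
        (univ : Finset (S → Fin 7)).card = 7 ^ r := by
      intro S hS
      rw [Finset.card_univ, Fintype.card_fun]
      simp only [Finset.mem_powersetCard_univ] at hS
      simp [hS]
    rw [Finset.sum_congr rfl h1, Finset.sum_const, Finset.card_powersetCard, card_univ,
      Fintype.card_fin, smul_eq_mul]
  rw [← hcardT]
  apply Finset.card_le_card_of_injOn
    (fun y => ⟨univ.filter (fun j => y j ≠ x j), fun j => if h : y j.1 ≠ x j.1 then
      (Fin.exists_succAbove_eq h).choose else 0⟩)
  · intro y hy
    simp only [Finset.mem_coe, Finset.mem_filter, Finset.mem_univ, true_and] at hy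
    simp only [Finset.mem_coe, Finset.mem_sigma, Finset.mem_powersetCard_univ, Finset.mem_univ, and_true]
    rw [← hy, hammingDist]
    congr 1
    ext j
    simp [ne_comm]
  · intro y hy y' hy' heq
    injection heq with h1 h2
    funext j
    by_cases hj : y j ≠ x j
    · have hj' : y' j ≠ x j := by
        have : j ∈ univ.filter (fun j => y' j ≠ x j) := by rw [← h1]; simpa using hj
        simpa using this
      have hmem : j ∈ univ.filter (fun j => y j ≠ x j) := by simpa using hj
      have hmem' : j ∈ univ.filter (fun j => y' j ≠ x j) := by simpa using hj'
      have hval := sigma_heq _ _ _ _ h1 h2 j hmem hmem'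
      rw [dif_pos hj, dif_pos hj'] at hval
      have e1 := (Fin.exists_succAbove_eq hj).choose_spec
      have e2 := (Fin.exists_succAbove_eq hj').choose_spec
      rw [← e1, ← e2, hval]
    · push_neg at hj
      have hj' : ¬ (y' j ≠ x j) := by
        intro hc
        have : j ∈ univ.filter (fun j => y j ≠ x j) := by rw [h1]; simpa using hc
        simp at this; exact absurd hj this
      push_neg at hj'
      rw [hj, hj']

lemma ballBound (k r : ℕ) (x : Fin k → Fin 8) :
    (univ.filter (fun y : Fin k → Fin 8 => hammingDist x y ≤ r)).card
      ≤ ∑ i ∈ range (r+1), k.choose i * 7^i := by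
  classical
  have hsplit : univ.filter (fun y : Fin k → Fin 8 => hammingDist x y ≤ r)
      = (range (r+1)).biUnion (fun i => univ.filter (fun y => hammingDist x y = i)) := by
    ext y; simp [Nat.lt_succ_iff]
  rw [hsplit]
  exact Finset.card_biUnion_le.trans (Finset.sum_le_sum fun i _ => sphereBound k i x)

lemma exists_code (k d : ℕ) (hd : 1 ≤ d) :
    ∃ C : Finset (Fin k → Fin 8),
      (∀ y ∈ C, ∀ y' ∈ C, y ≠ y' → d ≤ hammingDist y y') ∧
      (8:ℕ)^k ≤ C.card * ∑ i ∈ range d, k.choose i * 7^i := by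
  classical
  set s : Finset (Finset (Fin k → Fin 8)) :=
    univ.filter (fun C => ∀ y ∈ C, ∀ y' ∈ C, y ≠ y' → d ≤ hammingDist y y') with hs
  have hne : s.Nonempty := ⟨∅, by simp [hs]⟩
  obtain ⟨C, hCs, hmax⟩ := Finset.exists_max_image s Finset.card hne
  simp only [hs, Finset.mem_filter, Finset.mem_univ, true_and] at hCs
  refine ⟨C, hCs, ?_⟩
  -- covering property
  have hcover : ∀ z : Fin k → Fin 8, ∃ c ∈ C, hammingDist c z ≤ d - 1 := by
    intro z
    by_contra hcon
    push_neg at hcon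
    have hzC : z ∉ C := fun hz => absurd (by simp [hammingDist_self] : hammingDist z z ≤ d - 1)
      (by simpa using (hcon z hz).not_ge)
    have hgood : (insert z C) ∈ s := by
      simp only [hs, Finset.mem_filter, Finset.mem_univ, true_and]
      intro y hy y' hy' hne'
      rcases Finset.mem_insert.mp hy with h1 | h1
      · rcases Finset.mem_insert.mp hy' with h2 | h2
        · exact absurd (h1.trans h2.symm) hne'
        · subst h1
          have := hcon y' h2
          rw [hammingDist_comm]
          omega
      · rcases Finset.mem_insert.mp hy' with h2 | h2
        · subst h2
          have := hcon y h1
          omega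
        · exact hCs y h1 y' h2 hne'
    have := hmax _ hgood
    rw [Finset.card_insert_of_notMem hzC] at this
    omega
  -- counting
  have hsub : (univ : Finset (Fin k → Fin 8)) ⊆
      C.biUnion (fun c => univ.filter (fun y => hammingDist c y ≤ d - 1)) := by
    intro z _
    obtain ⟨c, hc, hcz⟩ := hcover z
    exact Finset.mem_biUnion.mpr ⟨c, hc, by simp [hcz]⟩
  have h1 : (8:ℕ)^k ≤ (C.biUnion (fun c => univ.filter (fun y => hammingDist c y ≤ d - 1))).card := by
    have := Finset.card_le_card hsub
    rwa [Finset.card_univ, Fintype.card_fun, Fintype.card_fin, Fintype.card_fin] at this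
  refine h1.trans (Finset.card_biUnion_le.trans ?_)
  have : ∀ c ∈ C, (univ.filter (fun y => hammingDist c y ≤ d - 1)).card
      ≤ ∑ i ∈ range d, k.choose i * 7^i := by
    intro c _
    have := ballBound k (d-1) c
    rwa [show d - 1 + 1 = d by omega] at this
  exact (Finset.sum_le_sum this).trans (by rw [Finset.sum_const, smul_eq_mul])

lemma base_ineq : (2:ℝ) ^ ((0.08:ℝ)) ≤ 2 * ((3:ℝ)/7) ^ ((3:ℝ)/4) := by
  have h2 : (0:ℝ) ≤ 2 := by norm_num
  have h37 : (0:ℝ) ≤ 3/7 := by norm_num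
  apply le_of_pow_le_pow_left₀ (n := 100) (by norm_num) (by positivity)
  have hL : ((2:ℝ) ^ ((0.08:ℝ))) ^ (100:ℕ) = 256 := by
    rw [← Real.rpow_natCast ((2:ℝ)^(0.08:ℝ)) 100, ← Real.rpow_mul h2]
    norm_num
  have hR : ((2:ℝ) * ((3:ℝ)/7) ^ ((3:ℝ)/4)) ^ (100:ℕ)
      = 2^(100:ℕ) * ((3:ℝ)/7)^(75:ℕ) := by
    rw [mul_pow, ← Real.rpow_natCast (((3:ℝ)/7)^((3:ℝ)/4)) 100, ← Real.rpow_mul h37]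
    norm_num
  rw [hL, hR, div_pow, ← mul_div_assoc, le_div_iff₀ (by positivity)]
  norm_num

lemma numeric (k M : ℕ) (hk : 1 ≤ k)
    (h : (8:ℕ)^k ≤ M * ∑ i ∈ range ((3*k+3)/4), k.choose i * 7^i) :
    (2:ℝ) ^ ((0.08:ℝ) * k) ≤ (M:ℝ) := by
  set d := (3*k+3)/4 with hd
  have hd1 : 1 ≤ d := by omega
  have hdk : d ≤ k := by omega
  have hR : (8:ℝ)^k ≤ (M:ℝ) * ∑ i ∈ range d, (k.choose i : ℝ) * 7^i := by
    exact_mod_cast h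
  have hb : (∑ i ∈ range (k+1), (k.choose i:ℝ)*3^i) = (4:ℝ)^k := by
    have hab := add_pow (3:ℝ) 1 k
    simp only [one_pow, mul_one] at hab
    rw [show (4:ℝ) = 3+1 by norm_num, hab]
    exact Finset.sum_congr rfl fun i _ => by ring
  have hV : (∑ i ∈ range d, (k.choose i : ℝ) * 7^i) ≤ ((7:ℝ)/3)^(d-1) * 4^k := by
    have step1 : ∀ i ∈ range d, (k.choose i:ℝ) * 7^i ≤ ((7:ℝ)/3)^(d-1) * ((k.choose i:ℝ) * 3^i) := by
      intro i hi
      simp only [mem_range] at hi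
      have hie : i ≤ d - 1 := by omega
      have h1 : ((7:ℝ)/3)^i ≤ ((7:ℝ)/3)^(d-1) := pow_le_pow_right₀ (by norm_num) hie
      have h7 : (7:ℝ)^i = 3^i * ((7:ℝ)/3)^i := by rw [← mul_pow]; norm_num
      rw [h7]
      calc (k.choose i:ℝ) * (3^i * ((7:ℝ)/3)^i)
          ≤ (k.choose i:ℝ) * (3^i * ((7:ℝ)/3)^(d-1)) := by
            apply mul_le_mul_of_nonneg_left
              (mul_le_mul_of_nonneg_left h1 (by positivity)) (by positivity)
        _ = ((7:ℝ)/3)^(d-1) * ((k.choose i:ℝ) * 3^i) := by ring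
    calc (∑ i ∈ range d, (k.choose i:ℝ)*7^i)
        ≤ ∑ i ∈ range d, ((7:ℝ)/3)^(d-1) * ((k.choose i:ℝ)*3^i) := Finset.sum_le_sum step1
      _ = ((7:ℝ)/3)^(d-1) * ∑ i ∈ range d, (k.choose i:ℝ)*3^i := by rw [Finset.mul_sum]
      _ ≤ ((7:ℝ)/3)^(d-1) * ∑ i ∈ range (k+1), (k.choose i:ℝ)*3^i := by
          apply mul_le_mul_of_nonneg_left _ (by positivity)
          apply Finset.sum_le_sum_of_subset_of_nonneg (range_subset_range.mpr (by omega))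
          intro i _ _; positivity
      _ = ((7:ℝ)/3)^(d-1) * 4^k := by rw [hb]
  have hpos : (0:ℝ) < ((7:ℝ)/3)^(d-1) * 4^k := by positivity
  have key : (2:ℝ)^k * ((3:ℝ)/7)^(d-1) * (((7:ℝ)/3)^(d-1) * 4^k) = 8^k := by
    have e1 : ((3:ℝ)/7)^(d-1) * ((7:ℝ)/3)^(d-1) = 1 := by rw [← mul_pow]; norm_num
    have e2 : (2:ℝ)^k * (4:ℝ)^k = 8^k := by rw [← mul_pow]; norm_num
    calc (2:ℝ)^k * ((3:ℝ)/7)^(d-1) * (((7:ℝ)/3)^(d-1) * 4^k)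
        = ((2:ℝ)^k * 4^k) * (((3:ℝ)/7)^(d-1) * ((7:ℝ)/3)^(d-1)) := by ring
      _ = 8^k := by rw [e1, e2, mul_one]
  have hM2 : (2:ℝ)^k * ((3:ℝ)/7)^(d-1) ≤ (M:ℝ) := by
    rw [← mul_le_mul_iff_of_pos_right hpos, key]
    exact hR.trans (mul_le_mul_of_nonneg_left hV (by positivity))
  refine le_trans ?_ hM2
  have hexp : ((3:ℝ)/7)^(((3:ℝ)/4)*k) ≤ ((3:ℝ)/7)^(((d-1:ℕ)):ℝ) := by
    apply Real.rpow_le_rpow_of_exponent_ge (by norm_num) (by norm_num)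
    have h4 : 4*(d-1) ≤ 3*k := by omega
    have : ((4*(d-1):ℕ):ℝ) ≤ ((3*k:ℕ):ℝ) := by exact_mod_cast h4
    push_cast at this
    linarith
  have hL : ((2:ℝ)^((0.08:ℝ)))^k = (2:ℝ)^((0.08:ℝ)*k) := by
    rw [← Real.rpow_natCast ((2:ℝ)^(0.08:ℝ)) k, ← Real.rpow_mul (by norm_num)]
  have hRk : ((2:ℝ)*((3:ℝ)/7)^((3:ℝ)/4))^k = (2:ℝ)^k * ((3:ℝ)/7)^(((3:ℝ)/4)*(k:ℝ)) := by
    rw [mul_pow, ← Real.rpow_natCast (((3:ℝ)/7)^((3:ℝ)/4)) k, ← Real.rpow_mul (by norm_num)]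
  calc (2:ℝ)^((0.08:ℝ)*k) = ((2:ℝ)^((0.08:ℝ)))^k := hL.symm
    _ ≤ ((2:ℝ)*((3:ℝ)/7)^((3:ℝ)/4))^k := pow_le_pow_left₀ (by positivity) base_ineq k
    _ = (2:ℝ)^k * ((3:ℝ)/7)^(((3:ℝ)/4)*(k:ℝ)) := hRk
    _ ≤ (2:ℝ)^k * ((3:ℝ)/7)^(d-1) := by
        rw [← Real.rpow_natCast ((3:ℝ)/7) (d-1)]
        exact mul_le_mul_of_nonneg_left hexp (by positivity)

def EMB (k : ℕ) (x : Fin k → Fin 8) : Fin (8*k) → Bool :=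
  fun j => decide ((x ⟨j.1 / 8, by have := j.2; omega⟩).1 = j.1 % 8)

lemma EMB_apply {k : ℕ} (x : Fin k → Fin 8) (q : Fin k) (s : Fin 8) (j : Fin (8*k))
    (hj : j.1 = 8*q.1 + s.1) : EMB k x j = decide (x q = s) := by
  have hq : j.1/8 = q.1 := by have := s.2; omega
  have hs : j.1 % 8 = s.1 := by have := s.2; omega
  have e : ∀ (h : j.1/8 < k), (⟨j.1/8, h⟩ : Fin k) = q := fun h => Fin.ext hq
  simp only [EMB]
  rw [e, hs]
  simp [Fin.ext_iff]

lemma EMB_weight {k : ℕ} (x : Fin k → Fin 8) :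
    (univ.filter (fun i => EMB k x i = true)).card = k := by
  classical
  have himg : univ.filter (fun i => EMB k x i = true)
      = univ.image (fun q : Fin k =>
          (⟨8*q.1 + (x q).1, by have := q.2; have := (x q).2; omega⟩ : Fin (8*k))) := by
    ext j
    simp only [mem_filter, mem_univ, true_and, mem_image]
    constructor
    · intro hj
      have hjq : j.1 < 8*k := j.2
      refine ⟨⟨j.1/8, by omega⟩, ?_⟩
      have hx : (x ⟨j.1/8, by omega⟩).1 = j.1 % 8 := by
        simpa [EMB] using hj
      exact Fin.ext (by simp only; omega)
    · rintro ⟨q, _, rfl⟩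
      rw [EMB_apply x q (x q) _ rfl]
      simp
  rw [himg, Finset.card_image_of_injective _ ?_, card_univ, Fintype.card_fin]
  intro q q' hqq
  have h1 := (x q).2
  have h2 := (x q').2
  rw [Fin.ext_iff] at hqq ⊢
  simp only at hqq
  omega

lemma EMB_inj (k : ℕ) : Function.Injective (EMB k) := by
  intro x x' h
  funext q
  have hj : (8*q.1 + (x q).1) < 8*k := by have := q.2; have := (x q).2; omega
  have hc := congr_fun h (⟨8*q.1 + (x q).1, hj⟩ : Fin (8*k))
  rw [EMB_apply x q (x q) _ rfl, EMB_apply x' q (x q) _ rfl] at hc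
  simp only [decide_eq_decide] at hc
  exact (hc.mp trivial).symm

lemma EMB_dist {k : ℕ} (x x' : Fin k → Fin 8) :
    2 * hammingDist x x' ≤ hammingDist (EMB k x) (EMB k x') := by
  classical
  have hL : 2 * hammingDist x x'
      = ((univ.filter (fun i => x i ≠ x' i)) ×ˢ (univ : Finset Bool)).card := by
    rw [Finset.card_product, hammingDist]
    simp [mul_comm]
  have hR : hammingDist (EMB k x) (EMB k x')
      = (univ.filter (fun j => EMB k x j ≠ EMB k x' j)).card := by
    rfl
  rw [hL, hR]
  apply Finset.card_le_card_of_injOn (fun p =>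
    (⟨8*p.1.1 + (if p.2 then x p.1 else x' p.1).1,
      by have := p.1.2; have := (if p.2 then x p.1 else x' p.1).2; omega⟩ : Fin (8*k)))
  · rintro ⟨q, b⟩ hp
    simp only [Finset.mem_coe, Finset.mem_product, mem_filter, mem_univ, true_and, and_true] at hp
    simp only [Finset.mem_coe, mem_filter, mem_univ, true_and]
    cases b
    · simp only [if_neg Bool.false_ne_true]
      rw [EMB_apply x q (x' q) _ rfl, EMB_apply x' q (x' q) _ rfl]
      simp [hp]
    · simp only [if_pos rfl]
      rw [EMB_apply x q (x q) _ rfl, EMB_apply x' q (x q) _ rfl]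
      simp
      intro hc
      exact hp (by rw [Fin.ext_iff] at hc ⊢; omega)
  · rintro ⟨q, b⟩ hp ⟨q', b'⟩ hp' heq
    simp only [Finset.mem_product, mem_filter, Finset.mem_coe, mem_univ, true_and, and_true] at hp hp'
    have hv := congrArg Fin.val heq
    simp only at hv
    have hs1 := (if b then x q else x' q).2
    have hs2 := (if b' then x q' else x' q').2
    have hqq : q.1 = q'.1 := by omega
    have hq : q = q' := Fin.ext hqq
    subst hq
    have hss : (if b then x q else x' q).1 = (if b' then x q else x' q).1 := by omega
    cases b <;> cases b'
    · rfl
    · simp only [Bool.false_eq_true, if_false, if_true] at hss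
      exact absurd (Fin.ext hss.symm) hp
    · simp only [Bool.false_eq_true, if_false, if_true] at hss
      exact absurd (Fin.ext hss) hp
    · rfl

/-- For every integer `k ≥ 1` there is a set `Y ⊆ {0,1}^{8k}` with `|Y| ≥ 2^{0.08k}`,
every vector in `Y` having exactly `k` ones, and minimum Hamming distance `≥ 3k/2`. -/
theorem stmt5 (k : ℕ) (hk : 1 ≤ k) :
    ∃ Y : Finset (Fin (8 * k) → Bool),
      (2 : ℝ) ^ ((0.08 : ℝ) * k) ≤ (Y.card : ℝ) ∧
      (∀ y ∈ Y, (Finset.univ.filter (fun i => y i = true)).card = k) ∧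
      (∀ y ∈ Y, ∀ y' ∈ Y, y ≠ y' → (3 * k : ℝ) / 2 ≤ (hammingDist y y' : ℝ)) := by
  classical
  obtain ⟨C, hCdist, hCcount⟩ := exists_code k ((3*k+3)/4) (by omega)
  refine ⟨C.image (EMB k), ?_, ?_, ?_⟩
  · rw [Finset.card_image_of_injective _ (EMB_inj k)]
    exact numeric k C.card hk hCcount
  · intro y hy
    obtain ⟨x, hx, rfl⟩ := Finset.mem_image.mp hy
    exact EMB_weight x
  · intro y hy y' hy' hne
    obtain ⟨x, hx, rfl⟩ := Finset.mem_image.mp hy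
    obtain ⟨x', hx', rfl⟩ := Finset.mem_image.mp hy'
    have hxx : x ≠ x' := fun h => hne (by rw [h])
    have hd := hCdist x hx x' hx' hxx
    have h2 := EMB_dist x x'
    have hnat : 3*k ≤ 2 * hammingDist (EMB k x) (EMB k x') := by omega
    have hcast : (3*(k:ℝ)) ≤ 2*(hammingDist (EMB k x) (EMB k x') : ℝ) := by exact_mod_cast hnat
    linarith
end
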